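/- The virtual braid group VB_n embeds in the singular virtual braid monoid SVB_n: the natural monoid homomorphism VB_n → SVB_n sending σ_i ↦ σ_i and ρ_i ↦ ρ_i is injective. -/

import Mathlib

namespace SVBPaper

/-- Generators of the singular virtual braid monoid: `s i` is `σ_i`, `si i` is `σ_i⁻¹`,
`r i` is `ρ_i`, `t i` is `τ_i`, for `1 ≤ i ≤ n-1` (encoded as `i : Fin (n-1)`). -/
inductive SVBGen (n : ℕ) : Type
  | s  : Fin (n - 1) → SVBGen n
  | si : Fin (n - 1) → SVBGen n
  | r  : Fin (n - 1) → SVBGen n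
  | t  : Fin (n - 1) → SVBGen n

/-- The index of a generator. -/
def SVBGen.idx {n : ℕ} : SVBGen n → Fin (n - 1)
  | s i => i
  | si i => i
  | r i => i
  | t i => i

/-- `|i - j| ≥ 2`. -/
def Far {n : ℕ} (i j : Fin (n - 1)) : Prop := (i : ℕ) + 2 ≤ j ∨ (j : ℕ) + 2 ≤ i

/-- The defining relations of the singular virtual braid monoid `SVB_n`. -/
inductive SVBRel (n : ℕ) : FreeMonoid (SVBGen n) → FreeMonoid (SVBGen n) → Prop
  | comm (x y : SVBGen n) (h : Far x.idx y.idx) :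
      SVBRel n (.of x * .of y) (.of y * .of x)
  | inv_right (i : Fin (n - 1)) : SVBRel n (.of (.s i) * .of (.si i)) 1
  | inv_left (i : Fin (n - 1)) : SVBRel n (.of (.si i) * .of (.s i)) 1
  | rho_sq (i : Fin (n - 1)) : SVBRel n (.of (.r i) * .of (.r i)) 1
  | braid_s (i : Fin (n - 1)) (h : (i : ℕ) + 1 < n - 1) :
      SVBRel n (.of (.s i) * .of (.s ⟨i + 1, h⟩) * .of (.s i))
        (.of (.s ⟨i + 1, h⟩) * .of (.s i) * .of (.s ⟨i + 1, h⟩))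
  | braid_r (i : Fin (n - 1)) (h : (i : ℕ) + 1 < n - 1) :
      SVBRel n (.of (.r i) * .of (.r ⟨i + 1, h⟩) * .of (.r i))
        (.of (.r ⟨i + 1, h⟩) * .of (.r i) * .of (.r ⟨i + 1, h⟩))
  | mixed_rs (i : Fin (n - 1)) (h : (i : ℕ) + 1 < n - 1) :
      SVBRel n (.of (.r i) * .of (.s ⟨i + 1, h⟩) * .of (.r i))
        (.of (.r ⟨i + 1, h⟩) * .of (.s i) * .of (.r ⟨i + 1, h⟩))
  | mixed_rt (i : Fin (n - 1)) (h : (i : ℕ) + 1 < n - 1) :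
      SVBRel n (.of (.r i) * .of (.t ⟨i + 1, h⟩) * .of (.r i))
        (.of (.r ⟨i + 1, h⟩) * .of (.t i) * .of (.r ⟨i + 1, h⟩))
  | ts (i : Fin (n - 1)) : SVBRel n (.of (.t i) * .of (.s i)) (.of (.s i) * .of (.t i))
  | sst (i : Fin (n - 1)) (h : (i : ℕ) + 1 < n - 1) :
      SVBRel n (.of (.s i) * .of (.s ⟨i + 1, h⟩) * .of (.t i))
        (.of (.t ⟨i + 1, h⟩) * .of (.s i) * .of (.s ⟨i + 1, h⟩))

/-- The singular virtual braid monoid on `n` strands. -/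
abbrev SVB (n : ℕ) : Type := PresentedMonoid (SVBRel n)

/-- `σ_i` in `SVB_n`. -/
def sσ {n : ℕ} (i : Fin (n - 1)) : SVB n := PresentedMonoid.of (SVBRel n) (.s i)
/-- `σ_i⁻¹` in `SVB_n`. -/
def sσi {n : ℕ} (i : Fin (n - 1)) : SVB n := PresentedMonoid.of (SVBRel n) (.si i)
/-- `ρ_i` in `SVB_n`. -/
def sρ {n : ℕ} (i : Fin (n - 1)) : SVB n := PresentedMonoid.of (SVBRel n) (.r i)
/-- `τ_i` in `SVB_n`. -/
def sτ {n : ℕ} (i : Fin (n - 1)) : SVB n := PresentedMonoid.of (SVBRel n) (.t i)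

/-- The `i`-th strand, as an element of `Fin n`. -/
def stA {n : ℕ} (i : Fin (n - 1)) : Fin n := ⟨i, by have := i.isLt; omega⟩
/-- The `(i+1)`-st strand, as an element of `Fin n`. -/
def stB {n : ℕ} (i : Fin (n - 1)) : Fin n := ⟨(i : ℕ) + 1, by have := i.isLt; omega⟩

/-- The transposition `(i, i+1)` in the symmetric group `S_n`. -/
def swapAdj {n : ℕ} (i : Fin (n - 1)) : Equiv.Perm (Fin n) := Equiv.swap (stA i) (stB i)


/-- Generators of the virtual braid group: `s i` is `σ_i`, `r i` is `ρ_i`. -/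
inductive VBGen (n : ℕ) : Type
  | s : Fin (n - 1) → VBGen n
  | r : Fin (n - 1) → VBGen n

def VBGen.idx {n : ℕ} : VBGen n → Fin (n - 1)
  | s i => i
  | r i => i

/-- The relators of the virtual braid group `VB_n`. -/
inductive VBRel (n : ℕ) : FreeGroup (VBGen n) → Prop
  | comm (x y : VBGen n) (h : Far x.idx y.idx) :
      VBRel n (.of x * .of y * (FreeGroup.of x)⁻¹ * (FreeGroup.of y)⁻¹)
  | rho_sq (i : Fin (n - 1)) : VBRel n (.of (.r i) * .of (.r i))
  | braid_s (i : Fin (n - 1)) (h : (i : ℕ) + 1 < n - 1) :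
      VBRel n (.of (.s i) * .of (.s ⟨i + 1, h⟩) * .of (.s i) *
        (FreeGroup.of (.s ⟨i + 1, h⟩) * FreeGroup.of (.s i) * FreeGroup.of (.s ⟨i + 1, h⟩))⁻¹)
  | braid_r (i : Fin (n - 1)) (h : (i : ℕ) + 1 < n - 1) :
      VBRel n (.of (.r i) * .of (.r ⟨i + 1, h⟩) * .of (.r i) *
        (FreeGroup.of (.r ⟨i + 1, h⟩) * FreeGroup.of (.r i) * FreeGroup.of (.r ⟨i + 1, h⟩))⁻¹)
  | mixed_rs (i : Fin (n - 1)) (h : (i : ℕ) + 1 < n - 1) :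
      VBRel n (.of (.r i) * .of (.s ⟨i + 1, h⟩) * .of (.r i) *
        (FreeGroup.of (.r ⟨i + 1, h⟩) * FreeGroup.of (.s i) * FreeGroup.of (.r ⟨i + 1, h⟩))⁻¹)

/-- The virtual braid group on `n` strands. -/
abbrev VB (n : ℕ) : Type := PresentedGroup {w | VBRel n w}

/-- `σ_i` in `VB_n`. -/
def vσ {n : ℕ} (i : Fin (n - 1)) : VB n := PresentedGroup.of (.s i)
/-- `ρ_i` in `VB_n`. -/
def vρ {n : ℕ} (i : Fin (n - 1)) : VB n := PresentedGroup.of (.r i)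



section Retraction

variable {n : ℕ}

/-- Image in `VB n` of a relator. -/
lemma relator_eq_one {w : FreeGroup (VBGen n)} (h : VBRel n w) :
    PresentedGroup.mk {w | VBRel n w} w = 1 := by
  have : w ∈ Subgroup.normalClosure {w | VBRel n w} :=
    Subgroup.subset_normalClosure h
  exact (QuotientGroup.eq_one_iff _).mpr this

/-- Generator map from `VBGen` to `VB n`. -/
def vgen (x : VBGen n) : VB n := PresentedGroup.of x

lemma vgen_comm {x y : VBGen n} (h : Far x.idx y.idx) : Commute (vgen x) (vgen y) := by
  have := relator_eq_one (VBRel.comm x y h)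
  simp only [map_mul, map_inv] at this
  have h2 : vgen x * vgen y * (vgen x)⁻¹ * (vgen y)⁻¹ = 1 := this
  rw [Commute, SemiconjBy]
  exact mul_inv_eq_one.mp (by rw [mul_inv_rev, ← mul_assoc]; exact h2)

lemma vρ_sq (i : Fin (n - 1)) : vρ i * vρ i = 1 := by
  have := relator_eq_one (VBRel.rho_sq i)
  simp only [map_mul] at this
  exact this

lemma v_braid_s (i : Fin (n - 1)) (h : (i : ℕ) + 1 < n - 1) :
    vσ i * vσ ⟨i + 1, h⟩ * vσ i = vσ ⟨i + 1, h⟩ * vσ i * vσ ⟨i + 1, h⟩ := by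
  have := relator_eq_one (VBRel.braid_s i h)
  simp only [map_mul, map_inv] at this
  have h2 : vσ i * vσ ⟨i + 1, h⟩ * vσ i * (vσ ⟨i + 1, h⟩ * vσ i * vσ ⟨i + 1, h⟩)⁻¹ = 1 := this
  exact mul_inv_eq_one.mp h2

lemma v_braid_r (i : Fin (n - 1)) (h : (i : ℕ) + 1 < n - 1) :
    vρ i * vρ ⟨i + 1, h⟩ * vρ i = vρ ⟨i + 1, h⟩ * vρ i * vρ ⟨i + 1, h⟩ := by
  have := relator_eq_one (VBRel.braid_r i h)
  simp only [map_mul, map_inv] at this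
  have h2 : vρ i * vρ ⟨i + 1, h⟩ * vρ i * (vρ ⟨i + 1, h⟩ * vρ i * vρ ⟨i + 1, h⟩)⁻¹ = 1 := this
  exact mul_inv_eq_one.mp h2

lemma v_mixed_rs (i : Fin (n - 1)) (h : (i : ℕ) + 1 < n - 1) :
    vρ i * vσ ⟨i + 1, h⟩ * vρ i = vρ ⟨i + 1, h⟩ * vσ i * vρ ⟨i + 1, h⟩ := by
  have := relator_eq_one (VBRel.mixed_rs i h)
  simp only [map_mul, map_inv] at this
  have h2 : vρ i * vσ ⟨i + 1, h⟩ * vρ i * (vρ ⟨i + 1, h⟩ * vσ i * vρ ⟨i + 1, h⟩)⁻¹ = 1 := this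
  exact mul_inv_eq_one.mp h2

/-- The underlying `VBGen` of an `SVBGen` (τ maps to σ). -/
def base : SVBGen n → VBGen n
  | .s i => .s i
  | .si i => .s i
  | .r i => .r i
  | .t i => .s i

lemma base_idx (x : SVBGen n) : (base x).idx = x.idx := by cases x <;> rfl

/-- Retraction on generators: `σ ↦ σ`, `σ⁻¹ ↦ σ⁻¹`, `ρ ↦ ρ`, `τ ↦ σ`. -/
def retGen : SVBGen n → VB n
  | .s i => vσ i
  | .si i => (vσ i)⁻¹
  | .r i => vρ i
  | .t i => vσ i

lemma retGen_eq (x : SVBGen n) :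
    retGen x = vgen (base x) ∨ retGen x = (vgen (base x))⁻¹ := by
  cases x <;> simp [retGen, base, vgen, vσ, vρ]

lemma retGen_comm {x y : SVBGen n} (h : Far x.idx y.idx) :
    Commute (retGen x) (retGen y) := by
  have hb : Commute (vgen (base x)) (vgen (base y)) := by
    apply vgen_comm; rwa [base_idx, base_idx]
  rcases retGen_eq x with hx | hx <;> rcases retGen_eq y with hy | hy <;> rw [hx, hy]
  · exact hb
  · exact hb.inv_right
  · exact hb.inv_left
  · exact hb.inv_left.inv_right

lemma ret_rels (a b : FreeMonoid (SVBGen n)) (hab : SVBRel n a b) :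
    FreeMonoid.lift retGen a = FreeMonoid.lift retGen b := by
  induction hab with
  | comm x y h => simpa using (retGen_comm h).eq
  | inv_right i => simpa [retGen] using mul_inv_cancel (vσ i)
  | inv_left i => simpa [retGen] using inv_mul_cancel (vσ i)
  | rho_sq i => simpa [retGen] using vρ_sq i
  | braid_s i h => simpa [retGen] using v_braid_s i h
  | braid_r i h => simpa [retGen] using v_braid_r i h
  | mixed_rs i h => simpa [retGen] using v_mixed_rs i h
  | mixed_rt i h => simpa [retGen] using v_mixed_rs i h
  | ts i => simp [retGen]
  | sst i h => simpa [retGen] using v_braid_s i h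

/-- The retraction `SVB n →* VB n`. -/
def retract : SVB n →* VB n := PresentedMonoid.lift retGen ret_rels

@[simp] lemma retract_sσ (i : Fin (n - 1)) : retract (sσ i) = vσ i := rfl
@[simp] lemma retract_sρ (i : Fin (n - 1)) : retract (sρ i) = vρ i := rfl

end Retraction

/-- The natural monoid homomorphism `VB_n → SVB_n`, `σ_i ↦ σ_i`,
`ρ_i ↦ ρ_i`, is injective. -/
theorem VB_embeds_in_SVB (n : ℕ) (hn : 2 ≤ n) (ι : VB n →* SVB n)
    (hι : ∀ i : Fin (n - 1),
      ι (vσ i) = sσ i ∧ ι ((vσ i)⁻¹) = sσi i ∧ ι (vρ i) = sρ i) :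
    Function.Injective ι := by
  have key : (retract.comp ι : VB n →* VB n) = MonoidHom.id (VB n) := by
    apply PresentedGroup.ext
    intro x
    cases x with
    | s i =>
      have := (hι i).1
      simp only [MonoidHom.comp_apply, MonoidHom.id_apply]
      show retract (ι (vσ i)) = vσ i
      rw [this]; rfl
    | r i =>
      have := (hι i).2.2
      simp only [MonoidHom.comp_apply, MonoidHom.id_apply]
      show retract (ι (vρ i)) = vρ i
      rw [this]; rfl
  intro a b hab
  have ha := DFunLike.congr_fun key a
  have hb := DFunLike.congr_fun key b
  simp only [MonoidHom.comp_apply, MonoidHom.id_apply] at ha hb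
  rw [← ha, ← hb, hab]

end SVBPaper
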